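/- Let 0 < β < 1 and T ≥ 1, and define the truncated kernel K_T^β : ℝ → ℝ by K_T^β(x) = 1 − |x|^β for 1/T ≤ |x| ≤ 1, K_T^β(x) = 1 − T^{−β} for |x| < 1/T, and K_T^β(x) = 0 for |x| > 1. Then: (i) K_T^β is Lipschitz continuous with Lipschitz constant max(1, β·T^{1−β}); (ii) |K_T^β(x) − K_T^β(y)| ≤ |x−y|^β for all x, y ∈ ℝ; (iii) |‖K_T^β‖²_{L²} − ‖K_β‖²_{L²}| ≤ √8·‖K_β‖_{L²}·T^{−1/2−β}, where K_β(x) = (1 − |x|^β)·1_{|x| ≤ 1}. -/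

import Mathlib

open MeasureTheory

/-- The optimal recovery kernel `K_β(x) = (1 - |x|^β)·1_{|x| ≤ 1}`. -/
noncomputable def optimalKernel (β : ℝ) (x : ℝ) : ℝ :=
  if |x| ≤ 1 then 1 - |x| ^ β else 0

/-- The truncated kernel `K_T^β`: equal to `1 - |x|^β` for `1/T ≤ |x| ≤ 1`, to `1 - T^{-β}`
for `|x| < 1/T`, and to `0` for `|x| > 1`. -/
noncomputable def truncKernel (β T : ℝ) (x : ℝ) : ℝ :=
  if 1 < |x| then 0 else if |x| < 1 / T then 1 - T ^ (-β) else 1 - |x| ^ β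

open Set
open scoped NNReal

-- subadditivity
lemma aux_rpow_sub_le {β : ℝ} (hβ0 : 0 ≤ β) (hβ1 : β ≤ 1) {s t : ℝ} (hs : 0 ≤ s) (hst : s ≤ t) :
    t ^ β - s ^ β ≤ (t - s) ^ β := by
  have hu : 0 ≤ t - s := sub_nonneg.2 hst
  have h := NNReal.rpow_add_le_add_rpow s.toNNReal (t - s).toNNReal hβ0 hβ1
  have h2 : ((s.toNNReal + (t - s).toNNReal) ^ β : ℝ≥0) = t ^ β := by
    push_cast
    rw [Real.coe_toNNReal _ hs, Real.coe_toNNReal _ hu]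
    ring_nf
  have h3 := (NNReal.coe_le_coe).2 h
  rw [h2] at h3
  push_cast at h3
  rw [Real.coe_toNNReal _ hs, Real.coe_toNNReal _ hu] at h3
  linarith

lemma aux_rpow_lip {β : ℝ} (hβ0 : 0 < β) (hβ1 : β ≤ 1) {c s t : ℝ} (hc : 0 < c)
    (hcs : c ≤ s) (hst : s ≤ t) : t ^ β - s ^ β ≤ β * c ^ (β - 1) * (t - s) := by
  have hs : 0 < s := hc.trans_le hcs
  have hu : 0 ≤ (t - s) / s := div_nonneg (by linarith) hs.le
  have hber := rpow_one_add_le_one_add_mul_self (s := (t - s) / s) (by linarith) hβ0.le hβ1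
  have h1 : t ^ β ≤ s ^ β * (1 + β * ((t - s) / s)) := by
    calc t ^ β = (s * (1 + (t - s) / s)) ^ β := by
          congr 1; field_simp; ring
      _ = s ^ β * (1 + (t - s) / s) ^ β := Real.mul_rpow hs.le (by linarith)
      _ ≤ s ^ β * (1 + β * ((t - s) / s)) :=
          mul_le_mul_of_nonneg_left hber (Real.rpow_nonneg hs.le β)
  have h2 : s ^ β * (β * ((t - s) / s)) = β * (s ^ (β - 1) * (t - s)) := by
    rw [Real.rpow_sub_one hs.ne']
    field_simp
  have h3 : s ^ (β - 1) ≤ c ^ (β - 1) :=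
    Real.rpow_le_rpow_of_nonpos hc hcs (by linarith)
  rw [mul_add, mul_one, h2] at h1
  have h5 : β * (s ^ (β - 1) * (t - s)) ≤ β * (c ^ (β - 1) * (t - s)) :=
    mul_le_mul_of_nonneg_left (mul_le_mul_of_nonneg_right h3 (by linarith)) hβ0.le
  rw [mul_assoc]
  linarith

lemma optimalKernel_eq {β : ℝ} (hβ0 : 0 < β) (x : ℝ) :
    optimalKernel β x = max 0 (1 - |x| ^ β) := by
  unfold optimalKernel
  split_ifs with h
  · rw [max_eq_right]
    have : |x| ^ β ≤ 1 := Real.rpow_le_one (abs_nonneg x) h hβ0.le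
    linarith
  · rw [max_eq_left]
    push_neg at h
    have : (1 : ℝ) ≤ |x| ^ β := by
      calc (1:ℝ) = 1 ^ β := (Real.one_rpow β).symm
        _ ≤ |x| ^ β := Real.rpow_le_rpow zero_le_one h.le hβ0.le
    linarith

lemma truncKernel_eq {β T : ℝ} (hβ0 : 0 < β) (hT : 1 ≤ T) (x : ℝ) :
    truncKernel β T x = max 0 (1 - (max (1 / T) |x|) ^ β) := by
  have hT0 : (0:ℝ) < T := lt_of_lt_of_le one_pos hT
  have hc0 : (0:ℝ) < 1 / T := by positivity
  have hc1 : 1 / T ≤ 1 := by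
    rw [div_le_one hT0]; exact hT
  unfold truncKernel
  split_ifs with h1 h2
  · rw [max_eq_right (hc1.trans h1.le), max_eq_left]
    have : (1 : ℝ) ≤ |x| ^ β := by
      calc (1:ℝ) = 1 ^ β := (Real.one_rpow β).symm
        _ ≤ |x| ^ β := Real.rpow_le_rpow zero_le_one h1.le hβ0.le
    linarith
  · rw [max_eq_left h2.le, max_eq_right]
    · congr 1
      rw [Real.rpow_neg hT0.le, one_div, Real.inv_rpow hT0.le]
    · have : (1/T) ^ β ≤ 1 := Real.rpow_le_one hc0.le hc1 hβ0.le
      linarith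
  · push_neg at h1 h2
    rw [max_eq_right h2, max_eq_right]
    have : |x| ^ β ≤ 1 := Real.rpow_le_one (abs_nonneg x) h1 hβ0.le
    linarith

lemma abs_rpow_sub_rpow_le_holder {β : ℝ} (hβ0 : 0 < β) (hβ1 : β ≤ 1) {s t : ℝ}
    (hs : 0 ≤ s) (ht : 0 ≤ t) : |s ^ β - t ^ β| ≤ |s - t| ^ β := by
  rcases le_total s t with h | h
  · rw [abs_sub_comm, abs_of_nonneg (sub_nonneg.2 (Real.rpow_le_rpow hs h hβ0.le)),
      abs_sub_comm, abs_of_nonneg (sub_nonneg.2 h)]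
    exact aux_rpow_sub_le hβ0.le hβ1 hs h
  · rw [abs_of_nonneg (sub_nonneg.2 (Real.rpow_le_rpow ht h hβ0.le)),
      abs_of_nonneg (sub_nonneg.2 h)]
    exact aux_rpow_sub_le hβ0.le hβ1 ht h

lemma abs_rpow_sub_rpow_le_lip {β c : ℝ} (hβ0 : 0 < β) (hβ1 : β ≤ 1) (hc : 0 < c) {s t : ℝ}
    (hs : c ≤ s) (ht : c ≤ t) : |s ^ β - t ^ β| ≤ β * c ^ (β - 1) * |s - t| := by
  rcases le_total s t with h | h
  · rw [abs_sub_comm,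
      abs_of_nonneg (sub_nonneg.2 (Real.rpow_le_rpow (hc.le.trans hs) h hβ0.le)),
      abs_sub_comm, abs_of_nonneg (sub_nonneg.2 h)]
    exact aux_rpow_lip hβ0 hβ1 hc hs h
  · rw [abs_of_nonneg (sub_nonneg.2 (Real.rpow_le_rpow (hc.le.trans ht) h hβ0.le)),
      abs_of_nonneg (sub_nonneg.2 h)]
    exact aux_rpow_lip hβ0 hβ1 hc ht h

lemma hcs_of_zero {f : ℝ → ℝ} (h : ∀ x, 1 < |x| → f x = 0) : HasCompactSupport f :=
  HasCompactSupport.intro (isCompact_Icc (a := (-1:ℝ)) (b := 1))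
    (fun x hx => h x (by
      by_contra hc
      exact hx (Set.mem_Icc.2 (abs_le.1 (not_lt.1 hc)))))


/-- Properties of the truncated kernel `K_T^β` (Lemma F.1 of the paper): it is Lipschitz
with constant `max 1 (β T^{1-β})`, belongs to `H(β,1)`, and its squared `L²`-norm is close
to that of `K_β`. -/
theorem stmt8 (β T : ℝ) (hβ0 : 0 < β) (hβ1 : β < 1) (hT : 1 ≤ T) :
    (∀ x y : ℝ, |truncKernel β T x - truncKernel β T y| ≤ max 1 (β * T ^ (1 - β)) * |x - y|) ∧
    (∀ x y : ℝ, |truncKernel β T x - truncKernel β T y| ≤ |x - y| ^ β) ∧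
    |(∫ x : ℝ, (truncKernel β T x) ^ 2) - (∫ x : ℝ, (optimalKernel β x) ^ 2)| ≤
      Real.sqrt 8 * Real.sqrt (∫ x : ℝ, (optimalKernel β x) ^ 2) * T ^ (-(1/2 : ℝ) - β) := by
  have part12 : (∀ x y : ℝ, |truncKernel β T x - truncKernel β T y| ≤
      max 1 (β * T ^ (1 - β)) * |x - y|) ∧
      (∀ x y : ℝ, |truncKernel β T x - truncKernel β T y| ≤ |x - y| ^ β) := by
      have hT0 : (0:ℝ) < T := lt_of_lt_of_le one_pos hT
      have hc0 : (0:ℝ) < 1 / T := by positivity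
      -- basic reduction
      have key : ∀ x y : ℝ, |truncKernel β T x - truncKernel β T y| ≤
          |(max (1 / T) |x|) ^ β - (max (1 / T) |y|) ^ β| := by
        intro x y
        rw [truncKernel_eq hβ0 hT x, truncKernel_eq hβ0 hT y, max_comm 0, max_comm 0]
        calc |max (1 - max (1 / T) |x| ^ β) 0 - max (1 - max (1 / T) |y| ^ β) 0|
            ≤ |(1 - max (1 / T) |x| ^ β) - (1 - max (1 / T) |y| ^ β)| :=
              abs_max_sub_max_le_abs _ _ _
          _ = |max (1 / T) |y| ^ β - max (1 / T) |x| ^ β| := by ring_nf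
          _ = |max (1 / T) |x| ^ β - max (1 / T) |y| ^ β| := abs_sub_comm _ _
      have hm : ∀ x y : ℝ, abs (max (1 / T) (|x|) - max (1 / T) (|y|)) ≤ |x - y| := by
        intro x y
        rw [max_comm (1/T) |x|, max_comm (1/T) |y|]
        exact (abs_max_sub_max_le_abs _ _ _).trans (abs_abs_sub_abs_le_abs_sub x y)
      constructor
      · intro x y
        refine (key x y).trans ?_
        have h1 := abs_rpow_sub_rpow_le_lip hβ0 hβ1.le hc0 (le_max_left (1/T) |x|)
          (le_max_left (1/T) |y|)
        have h2 : (1 / T : ℝ) ^ (β - 1) = T ^ (1 - β) := by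
          rw [one_div, ← Real.rpow_neg_one T, ← Real.rpow_mul hT0.le]
          congr 1; ring
        rw [h2] at h1
        refine h1.trans ?_
        exact mul_le_mul (le_max_right 1 _) (hm x y) (abs_nonneg _)
          (zero_le_one.trans (le_max_left 1 _))
      · intro x y
        refine (key x y).trans ?_
        refine (abs_rpow_sub_rpow_le_holder hβ0 hβ1.le (le_trans hc0.le (le_max_left _ _))
          (le_trans hc0.le (le_max_left _ _))).trans ?_
        exact Real.rpow_le_rpow (abs_nonneg _) (hm x y) hβ0.le
  refine ⟨part12.1, part12.2, ?_⟩
  have hT0 : (0:ℝ) < T := lt_of_lt_of_le one_pos hT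
  set c : ℝ := 1 / T with hc
  have hc0 : (0:ℝ) < c := by positivity
  have hc1 : c ≤ 1 := by rw [hc, div_le_one hT0]; exact hT
  set K := optimalKernel β with hKdef
  set G := truncKernel β T with hGdef
  have repK : ∀ x, K x = max 0 (1 - |x| ^ β) := optimalKernel_eq hβ0
  have repG : ∀ x, G x = max 0 (1 - (max c |x|) ^ β) := truncKernel_eq hβ0 hT
  -- continuity
  have contabs : Continuous fun x : ℝ => |x| ^ β :=
    continuous_abs.rpow_const fun x => Or.inr hβ0.le
  have contm : Continuous fun x : ℝ => (max c |x|) ^ β :=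
    (continuous_const.max continuous_abs).rpow_const fun x => Or.inr hβ0.le
  have contK : Continuous K := by
    rw [show K = fun x => max 0 (1 - |x| ^ β) from funext repK]
    exact continuous_const.max (continuous_const.sub contabs)
  have contG : Continuous G := by
    rw [show G = fun x => max 0 (1 - (max c |x|) ^ β) from funext repG]
    exact continuous_const.max (continuous_const.sub contm)
  -- vanishing outside [-1,1]
  have hKz : ∀ x, 1 < |x| → K x = 0 := by
    intro x hx; rw [hKdef]; unfold optimalKernel; rw [if_neg (not_le.2 hx)]
  have hGz : ∀ x, 1 < |x| → G x = 0 := by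
    intro x hx; rw [hGdef]; unfold truncKernel; rw [if_pos hx]
  -- pointwise bounds
  have hK0 : ∀ x, 0 ≤ K x := fun x => (repK x) ▸ le_max_left _ _
  have hG0 : ∀ x, 0 ≤ G x := fun x => (repG x) ▸ le_max_left _ _
  have hGK : ∀ x, G x ≤ K x := by
    intro x
    rw [repK x, repG x]
    have := Real.rpow_le_rpow (abs_nonneg x) (le_max_right c |x|) hβ0.le
    exact max_le_max le_rfl (by linarith)
  have hGeq : ∀ x, c ≤ |x| → G x = K x := by
    intro x h; rw [repK x, repG x, max_eq_right h]
  have hfub : ∀ x, K x - G x ≤ c ^ β := by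
    intro x
    rcases le_total c |x| with h | h
    · rw [hGeq x h, sub_self]; positivity
    · rw [repK x, repG x, max_eq_left h, max_eq_right, max_eq_right]
      · have := Real.rpow_le_rpow (abs_nonneg x) (h.trans hc1) hβ0.le
        have h2 : |x| ^ β ≤ c ^ β := Real.rpow_le_rpow (abs_nonneg x) h hβ0.le
        linarith [Real.rpow_nonneg (abs_nonneg x) β]
      · have : c ^ β ≤ 1 := Real.rpow_le_one hc0.le hc1 hβ0.le
        linarith
      · have : |x| ^ β ≤ 1 := Real.rpow_le_one (abs_nonneg x) (h.trans hc1) hβ0.le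
        linarith
  -- integrability
  have suppK : HasCompactSupport K := hcs_of_zero hKz
  have suppG : HasCompactSupport G := hcs_of_zero hGz
  have intK2 : Integrable (fun x => K x ^ 2) :=
    (contK.pow 2).integrable_of_hasCompactSupport
      (hcs_of_zero fun x hx => by show K x ^ 2 = 0; rw [hKz x hx]; ring)
  have intG2 : Integrable (fun x => G x ^ 2) :=
    (contG.pow 2).integrable_of_hasCompactSupport
      (hcs_of_zero fun x hx => by show G x ^ 2 = 0; rw [hGz x hx]; ring)
  have intf2 : Integrable (fun x => (K x - G x) ^ 2) :=
    ((contK.sub contG).pow 2).integrable_of_hasCompactSupport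
      (hcs_of_zero fun x hx => by show (K x - G x) ^ 2 = 0; rw [hKz x hx, hGz x hx]; ring)
  have intg2 : Integrable (fun x => (K x + G x) ^ 2) :=
    ((contK.add contG).pow 2).integrable_of_hasCompactSupport
      (hcs_of_zero fun x hx => by show (K x + G x) ^ 2 = 0; rw [hKz x hx, hGz x hx]; ring)
  have memf2 : MemLp (fun x => K x - G x) (ENNReal.ofReal 2) volume :=
    (contK.sub contG).memLp_of_hasCompactSupport
      (hcs_of_zero fun x hx => by show K x - G x = 0; rw [hKz x hx, hGz x hx]; ring)
  have memg2 : MemLp (fun x => K x + G x) (ENNReal.ofReal 2) volume :=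
    (contK.add contG).memLp_of_hasCompactSupport
      (hcs_of_zero fun x hx => by show K x + G x = 0; rw [hKz x hx, hGz x hx]; ring)
  -- Cauchy–Schwarz
  have hpq : Real.HolderConjugate 2 2 := ⟨by norm_num, two_pos, two_pos⟩
  have hcs2 := integral_mul_le_Lp_mul_Lq_of_nonneg (μ := volume) hpq
    (Filter.Eventually.of_forall fun x => sub_nonneg.2 (hGK x))
    (Filter.Eventually.of_forall fun x => add_nonneg (hK0 x) (hG0 x)) memf2 memg2
  simp_rw [Real.rpow_two] at hcs2
  rw [← Real.sqrt_eq_rpow, ← Real.sqrt_eq_rpow] at hcs2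
  -- LHS equality
  have habs : |(∫ x, G x ^ 2) - (∫ x, K x ^ 2)| = (∫ x, K x ^ 2) - (∫ x, G x ^ 2) := by
    rw [abs_sub_comm, abs_of_nonneg (sub_nonneg.2 (integral_mono intG2 intK2
      fun x => pow_le_pow_left₀ (hG0 x) (hGK x) 2))]
  have hIeq : (∫ x, K x ^ 2) - (∫ x, G x ^ 2) = ∫ x, (K x - G x) * (K x + G x) := by
    rw [← integral_sub intK2 intG2]
    exact integral_congr_ae (ae_of_all _ fun x => by ring)
  -- bound on ∫ f²
  have hind : Integrable (Set.indicator (Set.Icc (-c) c) fun _ : ℝ => (c ^ β) ^ 2) := by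
    have h1 : IntegrableOn (fun _ : ℝ => (c ^ β) ^ 2) (Set.Icc (-c) c) volume :=
      integrableOn_const measure_Icc_lt_top.ne
    exact h1.integrable_indicator measurableSet_Icc
  have hA : (∫ x, (K x - G x) ^ 2) ≤ 2 * c * (c ^ β) ^ 2 := by
    have hpt : ∀ x, (K x - G x) ^ 2 ≤
        Set.indicator (Set.Icc (-c) c) (fun _ : ℝ => (c ^ β) ^ 2) x := by
      intro x
      by_cases hx : x ∈ Set.Icc (-c) c
      · rw [Set.indicator_of_mem hx]
        exact pow_le_pow_left₀ (sub_nonneg.2 (hGK x)) (hfub x) 2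
      · rw [Set.indicator_of_notMem hx, hGeq x, sub_self]
        · norm_num
        · by_contra hcon
          exact hx (Set.mem_Icc.2 (abs_le.1 (not_le.1 hcon).le))
    calc (∫ x, (K x - G x) ^ 2)
        ≤ ∫ x, Set.indicator (Set.Icc (-c) c) (fun _ : ℝ => (c ^ β) ^ 2) x :=
          integral_mono intf2 hind hpt
      _ = (volume (Set.Icc (-c) c)).toReal • ((c ^ β) ^ 2) :=
          integral_indicator_const _ measurableSet_Icc
      _ = 2 * c * (c ^ β) ^ 2 := by
          rw [Real.volume_Icc, ENNReal.toReal_ofReal (by linarith), smul_eq_mul]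
          ring
  have hcT : c = T ^ (-1 : ℝ) := by rw [Real.rpow_neg_one, hc, one_div]
  have hAs : Real.sqrt (∫ x, (K x - G x) ^ 2) ≤ Real.sqrt 2 * T ^ (-(1/2 : ℝ) - β) := by
    refine (Real.sqrt_le_sqrt hA).trans ?_
    have key2 : 2 * c * (c ^ β) ^ 2 = (Real.sqrt 2 * T ^ (-(1/2 : ℝ) - β)) ^ 2 := by
      rw [mul_pow, Real.sq_sqrt (by norm_num : (0:ℝ) ≤ 2)]
      have e1 : ((T ^ (-1 : ℝ)) ^ β) ^ (2 : ℕ) = T ^ ((-1) * β * 2) := by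
        rw [← Real.rpow_mul hT0.le, ← Real.rpow_natCast (T ^ ((-1) * β)) 2,
          ← Real.rpow_mul hT0.le]
        norm_num
      have e2 : (T ^ (-(1/2 : ℝ) - β)) ^ (2 : ℕ) = T ^ ((-(1/2 : ℝ) - β) * 2) := by
        rw [← Real.rpow_natCast (T ^ (-(1/2 : ℝ) - β)) 2, ← Real.rpow_mul hT0.le]
        norm_num
      rw [hcT, e1, e2, mul_assoc, ← Real.rpow_add hT0]
      congr 1
      ring
    rw [key2, Real.sqrt_sq (by positivity)]
  -- bound on ∫ g²
  have hgs : Real.sqrt (∫ x, (K x + G x) ^ 2) ≤ 2 * Real.sqrt (∫ x, K x ^ 2) := by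
    have hB : (∫ x, (K x + G x) ^ 2) ≤ 4 * ∫ x, K x ^ 2 := by
      calc (∫ x, (K x + G x) ^ 2) ≤ ∫ x, 4 * K x ^ 2 :=
            integral_mono intg2 (intK2.const_mul 4)
              (fun x => by nlinarith [hG0 x, hGK x, hK0 x])
        _ = 4 * ∫ x, K x ^ 2 := integral_const_mul 4 _
    refine (Real.sqrt_le_sqrt hB).trans ?_
    rw [show (4 : ℝ) * ∫ x, K x ^ 2 = 2 ^ 2 * ∫ x, K x ^ 2 by norm_num,
      Real.sqrt_mul (by positivity), Real.sqrt_sq (by norm_num : (0:ℝ) ≤ 2)]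
  -- assemble
  have h8 : Real.sqrt 8 = 2 * Real.sqrt 2 := by
    rw [show (8 : ℝ) = 2 ^ 2 * 2 by norm_num, Real.sqrt_mul (by positivity),
      Real.sqrt_sq (by norm_num : (0:ℝ) ≤ 2)]
  rw [habs, hIeq]
  calc (∫ x, (K x - G x) * (K x + G x))
      ≤ Real.sqrt (∫ x, (K x - G x) ^ 2) * Real.sqrt (∫ x, (K x + G x) ^ 2) := hcs2
    _ ≤ (Real.sqrt 2 * T ^ (-(1/2 : ℝ) - β)) * (2 * Real.sqrt (∫ x, K x ^ 2)) :=
        mul_le_mul hAs hgs (Real.sqrt_nonneg _) (by positivity)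
    _ = Real.sqrt 8 * Real.sqrt (∫ x, K x ^ 2) * T ^ (-(1/2 : ℝ) - β) := by
        rw [h8]; ring
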